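/- Let m ≥ 1, n = 32m³ + 16m² + 6m + 1, and let X be the circulant graph X(Z_n; {±1, ±(8m²+2m), ±(8m²+6m+2)}) (the largest known circulant graph of degree 6 and diameter k = 3m, isomorphism class 2). Then the set of type T_1 vertices at distance exactly 2m+1 from 0 is precisely {2m+1, −(2m+1)} (two distinct vertices), and there are no type T_1 vertices at distance l from 0 for any l ≥ 2m+2. -/

import Mathlib

/-- The circulant graph `X(Z_n; {±g 0, …, ±g (f-1)})`: vertices are `ZMod n`, and distinct
`u, v` are adjacent iff `v - u ≡ ±g i (mod n)` for some `i`. -/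
def circulant (n : ℕ) {f : ℕ} (g : Fin f → ℤ) : SimpleGraph (ZMod n) where
  Adj u v := u ≠ v ∧ ∃ i, v - u = (g i : ZMod n) ∨ u - v = (g i : ZMod n)
  symm := by
    constructor
    rintro u v ⟨hne, i, h | h⟩
    · exact ⟨hne.symm, i, Or.inr h⟩
    · exact ⟨hne.symm, i, Or.inl h⟩
  loopless := by constructor; rintro u ⟨hne, -⟩; exact hne rfl


namespace S19

abbrev n' (m : ℕ) : ℕ := 32*m^3+16*m^2+6*m+1
abbrev B (m : ℕ) : ℤ := 8*(m : ℤ)^2+2*m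
abbrev C (m : ℕ) : ℤ := 8*(m : ℤ)^2+6*m+2
abbrev nI (m : ℕ) : ℤ := 32*(m:ℤ)^3+16*(m:ℤ)^2+6*(m:ℤ)+1

lemma ncast (m : ℕ) : ((n' m : ℕ) : ℤ) = nI m := by push_cast; ring

instance (m : ℕ) : NeZero (n' m) := ⟨by positivity⟩

lemma mono (m : ℕ) (hm : 1 ≤ m) :
    (1:ℤ) ≤ (m:ℤ) ∧ (m:ℤ) ≤ (m:ℤ)^2 ∧ (m:ℤ)^2 ≤ (m:ℤ)^3 := by
  have h1 : (1:ℤ) ≤ (m:ℤ) := by exact_mod_cast hm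
  refine ⟨h1, ?_, ?_⟩ <;> nlinarith

lemma cast_sub_zero (m : ℕ) (x y : ℤ)
    (h : ((x : ℤ) : ZMod (n' m)) = (y : ZMod (n' m))) : (nI m) ∣ (x - y) := by
  have : ((x - y : ℤ) : ZMod (n' m)) = 0 := by push_cast [h]; ring
  rw [ZMod.intCast_zmod_eq_zero_iff_dvd] at this
  rwa [ncast] at this

lemma cast_eq_of (m : ℕ) (x y k : ℤ) (h : x - y = k * nI m) :
    ((x : ℤ) : ZMod (n' m)) = (y : ZMod (n' m)) := by
  have h0 : (((n' m : ℕ) : ℤ) : ZMod (n' m)) = 0 := by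
    rw [Int.cast_natCast, ZMod.natCast_self]
  rw [← sub_eq_zero]
  have h2 : ((x : ZMod (n' m)) - (y : ZMod (n' m))) = ((x - y : ℤ) : ZMod (n' m)) := by
    push_cast; ring
  rw [h2, h, Int.cast_mul, ← ncast, h0, mul_zero]

lemma not_dvd_small (m : ℕ) (z : ℤ) (h1 : z ≠ 0) (h2 : |z| < nI m) : ¬ (nI m ∣ z) := by
  intro hd
  exact h1 (Int.eq_zero_of_abs_lt_dvd hd h2)

lemma cast_ne (m : ℕ) (x y : ℤ) (h1 : x ≠ y) (h2 : |x - y| < nI m) :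
    ((x : ℤ) : ZMod (n' m)) ≠ (y : ZMod (n' m)) := by
  intro h
  exact not_dvd_small m (x - y) (sub_ne_zero.mpr h1) h2 (cast_sub_zero m x y h)

lemma exact_eq (m : ℕ) (hm : 1 ≤ m) (a b c V : ℤ)
    (hb : a.natAbs + b.natAbs + c.natAbs ≤ 2*m)
    (hV : |V| ≤ 8*(m:ℤ)^2+8*(m:ℤ)+3)
    (h : ((a + b*B m + c*C m : ℤ) : ZMod (n' m)) = (V : ZMod (n' m))) :
    a + b*B m + c*C m = V := by
  obtain ⟨h1, h2, h3⟩ := mono m hm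
  have hd := cast_sub_zero m _ _ h
  have habs : |a| + |b| + |c| ≤ 2*(m:ℤ) := by
    have := hb
    zify at this
    simpa [Int.natCast_natAbs] using this
  have h0a := abs_nonneg a; have h0b := abs_nonneg b; have h0c := abs_nonneg c
  have hBpos : (0:ℤ) ≤ B m := by simp only [B]; nlinarith
  have hCpos : (1:ℤ) ≤ C m := by simp only [C]; nlinarith
  have hBC : B m ≤ C m := by simp only [B, C]; nlinarith
  have key : |a + b*B m + c*C m - V| < nI m := by
    have t0 := abs_add_le (a + b*B m + c*C m) (-V)
    rw [abs_neg] at t0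
    have t0' : |a + b*B m + c*C m - V| ≤ |a + b*B m + c*C m| + |V| := by
      have : a + b*B m + c*C m - V = a + b*B m + c*C m + -V := by ring
      rw [this]; exact t0
    have ta := abs_add_le (a + b*B m) (c*C m)
    have tb := abs_add_le a (b*B m)
    have hBabs : |B m| = B m := abs_of_nonneg hBpos
    have hCabs : |C m| = C m := abs_of_nonneg (by linarith)
    have t2 : |b*B m| ≤ |b| * C m := by
      rw [abs_mul, hBabs]
      exact mul_le_mul_of_nonneg_left hBC h0b
    have t3 : |c*C m| = |c| * C m := by rw [abs_mul, hCabs]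
    have e2 : |a| + |b| * C m + |c| * C m ≤ 2*(m:ℤ)*C m := by
      have ha1 : |a| * 1 ≤ |a| * C m := mul_le_mul_of_nonneg_left hCpos h0a
      have e3 : (|a| + |b| + |c|)*C m ≤ 2*(m:ℤ)*C m :=
        mul_le_mul_of_nonneg_right habs (by linarith)
      nlinarith
    have e4 : 2*(m:ℤ)*C m + (8*(m:ℤ)^2+8*(m:ℤ)+3) < nI m := by
      simp only [C, nI]; nlinarith
    linarith
  exact sub_eq_zero.mp (Int.eq_zero_of_abs_lt_dvd hd key)

end S19

namespace S19

/-- Generic analysis of short solutions of `a + b*g₂ + c*g₃ = (4M+1)q₀ + r`. -/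
lemma genC (M a b c q0 r : ℤ) (hM : 1 ≤ M)
    (h : a + b*(8*M^2+2*M) + c*(8*M^2+6*M+2) = (4*M+1)*q0 + r)
    (hr : |r| ≤ 2*M+2) (hq : |q0| ≤ 2*M+1)
    (habs : |a| + |b| + |c| ≤ 2*M) :
    ∃ e t : ℤ, (e = -1 ∨ e = 0 ∨ e = 1) ∧
      ((t = -2 ∨ t = -1 ∨ t = 0 ∨ t = 1 ∨ t = 2) ∨ (M = 1 ∧ (t = -3 ∨ t = 3))) ∧
      b + c = t ∧ c = q0 + e - 2*M*t ∧ a = r - (4*M+1)*e - c := by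
  have h0a := abs_nonneg a; have h0b := abs_nonneg b; have h0c := abs_nonneg c
  have haa := le_abs_self a; have haa' := neg_abs_le a
  have hbb := le_abs_self b; have hbb' := neg_abs_le b
  have hcc := le_abs_self c; have hcc' := neg_abs_le c
  have hrr := abs_le.mp hr
  have hqq := abs_le.mp hq
  have h1 : (4*M+1)*(2*M*b + (2*M+1)*c - q0) = r - (a + c) := by linear_combination h
  have hQu : 2*M*b + (2*M+1)*c - q0 ≤ 1 := by
    by_contra hh
    push_neg at hh
    have h2 : (2:ℤ) ≤ 2*M*b + (2*M+1)*c - q0 := hh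
    have := mul_le_mul_of_nonneg_left h2 (show (0:ℤ) ≤ 4*M+1 by linarith)
    linarith
  have hQl : -1 ≤ 2*M*b + (2*M+1)*c - q0 := by
    by_contra hh
    push_neg at hh
    have h2 : 2*M*b + (2*M+1)*c - q0 ≤ -2 := by linarith
    have := mul_le_mul_of_nonneg_left h2 (show (0:ℤ) ≤ 4*M+1 by linarith)
    linarith
  refine ⟨2*M*b + (2*M+1)*c - q0, b + c, by omega, ?_, rfl, by ring, by linear_combination h1⟩
  -- bound t := b + c
  have h2Mt : |2*M*(b+c)| ≤ 4*M+2 := by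
    have hQ : |2*M*b + (2*M+1)*c| ≤ 2*M+2 := by
      rw [abs_le]; constructor <;> nlinarith [hQl, hQu, hqq.1, hqq.2]
    have e1 : 2*M*(b+c) = (2*M*b + (2*M+1)*c) - c := by ring
    rw [e1]
    calc |2*M*b + (2*M+1)*c - c| ≤ |2*M*b + (2*M+1)*c| + |c| := by
          have := abs_add_le (2*M*b + (2*M+1)*c) (-c)
          rw [abs_neg] at this
          simpa [sub_eq_add_neg] using this
      _ ≤ 4*M+2 := by linarith
  have habs2M : |2*M*(b+c)| = 2*M*|b+c| := by
    rw [abs_mul, abs_of_nonneg (show (0:ℤ) ≤ 2*M by linarith)]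
  rw [habs2M] at h2Mt
  have htb := le_abs_self (b+c); have htb' := neg_abs_le (b+c)
  have ht4 : |b+c| ≤ 3 := by
    by_contra hh
    push_neg at hh
    have h4 : (4:ℤ) ≤ |b+c| := by linarith
    have := mul_le_mul_of_nonneg_left h4 (show (0:ℤ) ≤ 2*M by linarith)
    linarith
  have ht3 : |b+c| = 3 → M = 1 := by
    intro h3
    rw [h3] at h2Mt
    linarith
  rcases le_or_gt (|b+c|) 2 with hle | hgt
  · left
    have := abs_le.mp hle
    omega
  · right
    have h3 : |b+c| = 3 := by omega
    have := ht3 h3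
    constructor
    · exact this
    · rcases abs_eq (show (0:ℤ) ≤ 3 by norm_num) |>.mp h3 with h' | h'
      · right; exact h'
      · left; exact h'

end S19

namespace S19

lemma natAbs_to_abs (a b c : ℤ) (L : ℕ) (h : a.natAbs + b.natAbs + c.natAbs ≤ L) :
    |a| + |b| + |c| ≤ (L:ℤ) := by
  zify at h
  simpa [Int.natCast_natAbs] using h

lemma noC1 (m : ℕ) (hm : 1 ≤ m) (a b c : ℤ)
    (hn : a.natAbs + b.natAbs + c.natAbs ≤ 2*m)
    (h : a + b*B m + c*C m = 2*(m:ℤ)+1) : False := by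
  have hM : (1:ℤ) ≤ (m:ℤ) := by exact_mod_cast hm
  have habs := natAbs_to_abs a b c (2*m) hn
  obtain ⟨e, t, he, ht, hbc, hc, ha⟩ := genC (m:ℤ) a b c 0 (2*(m:ℤ)+1) hM
    (by linear_combination h)
    (by rw [abs_of_nonneg (by linarith : (0:ℤ) ≤ 2*(m:ℤ)+1)] <;> linarith)
    (by rw [abs_zero]; positivity)
    (by push_cast at habs; linarith)
  rcases he with rfl | rfl | rfl <;>
    rcases ht with (rfl|rfl|rfl|rfl|rfl) | ⟨hM1, rfl|rfl⟩ <;> omega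

lemma noC2 (m : ℕ) (hm : 1 ≤ m) (a b c : ℤ)
    (hn : a.natAbs + b.natAbs + c.natAbs ≤ 2*m - 1)
    (h : a + b*B m + c*C m = 2*(m:ℤ)) : False := by
  have hM : (1:ℤ) ≤ (m:ℤ) := by exact_mod_cast hm
  have habs := natAbs_to_abs a b c (2*m-1) hn
  have habs' : |a| + |b| + |c| ≤ 2*(m:ℤ) := by
    have : ((2*m-1 : ℕ) : ℤ) ≤ 2*(m:ℤ) := by omega
    linarith
  obtain ⟨e, t, he, ht, hbc, hc, ha⟩ := genC (m:ℤ) a b c 0 (2*(m:ℤ)) hM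
    (by linear_combination h)
    (by rw [abs_of_nonneg (by linarith : (0:ℤ) ≤ 2*(m:ℤ))] <;> linarith)
    (by rw [abs_zero]; positivity)
    habs'
  rcases he with rfl | rfl | rfl <;>
    rcases ht with (rfl|rfl|rfl|rfl|rfl) | ⟨hM1, rfl|rfl⟩ <;> omega

lemma noC3 (m : ℕ) (hm : 1 ≤ m) (a b c : ℤ)
    (hn : a.natAbs + b.natAbs + c.natAbs ≤ 2*m)
    (h : a + b*B m + c*C m = 2*(m:ℤ)+2) : False := by
  have hM : (1:ℤ) ≤ (m:ℤ) := by exact_mod_cast hm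
  have habs := natAbs_to_abs a b c (2*m) hn
  obtain ⟨e, t, he, ht, hbc, hc, ha⟩ := genC (m:ℤ) a b c 0 (2*(m:ℤ)+2) hM
    (by linear_combination h)
    (by rw [abs_of_nonneg (by linarith : (0:ℤ) ≤ 2*(m:ℤ)+2)] <;> linarith)
    (by rw [abs_zero]; positivity)
    (by push_cast at habs; linarith)
  rcases he with rfl | rfl | rfl <;>
    rcases ht with (rfl|rfl|rfl|rfl|rfl) | ⟨hM1, rfl|rfl⟩ <;> omega

lemma noC4 (m : ℕ) (hm : 1 ≤ m) (a b c : ℤ)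
    (hn : a.natAbs + b.natAbs + c.natAbs ≤ 2*m)
    (h : a + b*B m + c*C m = 2*(m:ℤ)+1 + B m) : False := by
  have hM : (1:ℤ) ≤ (m:ℤ) := by exact_mod_cast hm
  have habs := natAbs_to_abs a b c (2*m) hn
  obtain ⟨e, t, he, ht, hbc, hc, ha⟩ := genC (m:ℤ) a b c (2*(m:ℤ)) (2*(m:ℤ)+1) hM
    (by linear_combination h)
    (by rw [abs_of_nonneg (by linarith : (0:ℤ) ≤ 2*(m:ℤ)+1)] <;> linarith)
    (by rw [abs_of_nonneg (by linarith : (0:ℤ) ≤ 2*(m:ℤ))] <;> linarith)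
    (by push_cast at habs; linarith)
  rcases he with rfl | rfl | rfl <;>
    rcases ht with (rfl|rfl|rfl|rfl|rfl) | ⟨hM1, rfl|rfl⟩ <;> omega

lemma noC5 (m : ℕ) (hm : 1 ≤ m) (a b c : ℤ)
    (hn : a.natAbs + b.natAbs + c.natAbs ≤ 2*m)
    (h : a + b*B m + c*C m = 2*(m:ℤ)+1 - B m) : False := by
  have hM : (1:ℤ) ≤ (m:ℤ) := by exact_mod_cast hm
  have habs := natAbs_to_abs a b c (2*m) hn
  obtain ⟨e, t, he, ht, hbc, hc, ha⟩ := genC (m:ℤ) a b c (1-2*(m:ℤ)) (-(2*(m:ℤ))) hM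
    (by linear_combination h)
    (by rw [abs_of_nonpos (by linarith : -(2*(m:ℤ)) ≤ 0)] <;> linarith)
    (by rw [abs_of_nonpos (by linarith : 1-2*(m:ℤ) ≤ 0)] <;> linarith)
    (by push_cast at habs; linarith)
  rcases he with rfl | rfl | rfl <;>
    rcases ht with (rfl|rfl|rfl|rfl|rfl) | ⟨hM1, rfl|rfl⟩ <;> omega

lemma noC6 (m : ℕ) (hm : 1 ≤ m) (a b c : ℤ)
    (hn : a.natAbs + b.natAbs + c.natAbs ≤ 2*m)
    (h : a + b*B m + c*C m = 2*(m:ℤ)+1 + C m) : False := by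
  have hM : (1:ℤ) ≤ (m:ℤ) := by exact_mod_cast hm
  have habs := natAbs_to_abs a b c (2*m) hn
  obtain ⟨e, t, he, ht, hbc, hc, ha⟩ := genC (m:ℤ) a b c (2*(m:ℤ)+1) (2*(m:ℤ)+2) hM
    (by linear_combination h)
    (by rw [abs_of_nonneg (by linarith : (0:ℤ) ≤ 2*(m:ℤ)+2)] <;> linarith)
    (by rw [abs_of_nonneg (by linarith : (0:ℤ) ≤ 2*(m:ℤ)+1)] <;> linarith)
    (by push_cast at habs; linarith)
  rcases he with rfl | rfl | rfl <;>
    rcases ht with (rfl|rfl|rfl|rfl|rfl) | ⟨hM1, rfl|rfl⟩ <;> omega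

lemma noC7 (m : ℕ) (hm : 1 ≤ m) (a b c : ℤ)
    (hn : a.natAbs + b.natAbs + c.natAbs ≤ 2*m)
    (h : a + b*B m + c*C m = 2*(m:ℤ)+1 - C m) : False := by
  have hM : (1:ℤ) ≤ (m:ℤ) := by exact_mod_cast hm
  have habs := natAbs_to_abs a b c (2*m) hn
  obtain ⟨e, t, he, ht, hbc, hc, ha⟩ := genC (m:ℤ) a b c (-(2*(m:ℤ))) (-(2*(m:ℤ)+1)) hM
    (by linear_combination h)
    (by rw [abs_of_nonpos (by linarith : -(2*(m:ℤ)+1) ≤ 0)] <;> linarith)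
    (by rw [abs_of_nonpos (by linarith : -(2*(m:ℤ)) ≤ 0)] <;> linarith)
    (by push_cast at habs; linarith)
  rcases he with rfl | rfl | rfl <;>
    rcases ht with (rfl|rfl|rfl|rfl|rfl) | ⟨hM1, rfl|rfl⟩ <;> omega

end S19

namespace S19

/-- the generator vector -/
abbrev gv (m : ℕ) : Fin 3 → ℤ := ![(1 : ℤ), 8*(m : ℤ)^2+2*m, 8*(m : ℤ)^2+6*m+2]

/-- the graph -/
abbrev X' (m : ℕ) : SimpleGraph (ZMod (n' m)) := circulant (n' m) (gv m)

lemma gen_bound (m : ℕ) (hm : 1 ≤ m) (γ : ℤ)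
    (hγ : γ = 1 ∨ γ = -1 ∨ γ = B m ∨ γ = -B m ∨ γ = C m ∨ γ = -C m) :
    γ ≠ 0 ∧ |γ| < nI m := by
  obtain ⟨h1, h2, h3⟩ := mono m hm
  have hB : (0:ℤ) < B m := by simp only [B]; nlinarith
  have hC : (0:ℤ) < C m := by simp only [C]; nlinarith
  have hBn : B m < nI m := by simp only [B, nI]; nlinarith
  have hCn : C m < nI m := by simp only [C, nI]; nlinarith
  have h1n : (1:ℤ) < nI m := by simp only [nI]; nlinarith
  rcases hγ with rfl | rfl | rfl | rfl | rfl | rfl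
  · exact ⟨one_ne_zero, by rw [abs_one]; linarith⟩
  · exact ⟨by norm_num, by rw [abs_neg, abs_one]; linarith⟩
  · exact ⟨by linarith, by rw [abs_of_nonneg (by linarith : (0:ℤ) ≤ B m)]; linarith⟩
  · exact ⟨by simp only [ne_eq, neg_eq_zero]; intro hh; rw [hh] at hB; exact lt_irrefl 0 hB,
      by rw [abs_neg, abs_of_nonneg (by linarith : (0:ℤ) ≤ B m)]; linarith⟩
  · exact ⟨by linarith, by rw [abs_of_nonneg (by linarith : (0:ℤ) ≤ C m)]; linarith⟩
  · exact ⟨by simp only [ne_eq, neg_eq_zero]; intro hh; rw [hh] at hC; exact lt_irrefl 0 hC,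
      by rw [abs_neg, abs_of_nonneg (by linarith : (0:ℤ) ≤ C m)]; linarith⟩

lemma cast_gen_ne_zero (m : ℕ) (hm : 1 ≤ m) (γ : ℤ)
    (hγ : γ = 1 ∨ γ = -1 ∨ γ = B m ∨ γ = -B m ∨ γ = C m ∨ γ = -C m) :
    (γ : ZMod (n' m)) ≠ 0 := by
  obtain ⟨h1, h2⟩ := gen_bound m hm γ hγ
  have := cast_ne m γ 0 h1 (by simpa using h2)
  simpa using this

lemma adj_int (m : ℕ) (hm : 1 ≤ m) (x : ZMod (n' m)) (γ : ℤ)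
    (hγ : γ = 1 ∨ γ = -1 ∨ γ = B m ∨ γ = -B m ∨ γ = C m ∨ γ = -C m) :
    (X' m).Adj x (x + (γ : ZMod (n' m))) := by
  have hne0 := cast_gen_ne_zero m hm γ hγ
  show x ≠ x + (γ : ZMod (n' m)) ∧ ∃ i, x + (γ : ZMod (n' m)) - x = ((gv m i : ℤ) : ZMod (n' m))
      ∨ x - (x + (γ : ZMod (n' m))) = ((gv m i : ℤ) : ZMod (n' m))
  constructor
  · intro hEq
    apply hne0
    have := hEq.symm
    rwa [add_eq_left] at this
  · rcases hγ with rfl | rfl | rfl | rfl | rfl | rfl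
    · exact ⟨0, Or.inl (by rw [show (gv m 0 : ℤ) = 1 from rfl]; push_cast; ring)⟩
    · exact ⟨0, Or.inr (by rw [show (gv m 0 : ℤ) = 1 from rfl]; push_cast; ring)⟩
    · exact ⟨1, Or.inl (by rw [show (gv m 1 : ℤ) = B m from rfl]; push_cast; ring)⟩
    · exact ⟨1, Or.inr (by rw [show (gv m 1 : ℤ) = B m from rfl]; push_cast; ring)⟩
    · exact ⟨2, Or.inl (by rw [show (gv m 2 : ℤ) = C m from rfl]; push_cast; ring)⟩
    · exact ⟨2, Or.inr (by rw [show (gv m 2 : ℤ) = C m from rfl]; push_cast; ring)⟩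

lemma reach0 (m : ℕ) (hm : 1 ≤ m) (v : ZMod (n' m)) : (X' m).Reachable 0 v := by
  have key : ∀ k : ℕ, (X' m).Reachable 0 ((k : ℕ) : ZMod (n' m)) := by
    intro k
    induction k with
    | zero =>
      rw [Nat.cast_zero]
    | succ k ih =>
      refine ih.trans (SimpleGraph.Adj.reachable ?_)
      have := adj_int m hm ((k : ℕ) : ZMod (n' m)) 1 (Or.inl rfl)
      simpa using this
  have := key (v.val)
  rwa [ZMod.natCast_rightInverse v] at this

lemma conn (m : ℕ) (hm : 1 ≤ m) : (X' m).Connected := by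
  constructor
  intro u v
  exact (reach0 m hm u).symm.trans (reach0 m hm v)

lemma dist_step (m : ℕ) (hm : 1 ≤ m) (x : ZMod (n' m)) (γ : ℤ)
    (hγ : γ = 1 ∨ γ = -1 ∨ γ = B m ∨ γ = -B m ∨ γ = C m ∨ γ = -C m) :
    (X' m).dist 0 (x + (γ : ZMod (n' m))) ≤ (X' m).dist 0 x + 1 := by
  have h1 : (X' m).dist x (x + (γ : ZMod (n' m))) = 1 :=
    SimpleGraph.dist_eq_one_iff_adj.mpr (adj_int m hm x γ hγ)
  have := (conn m hm).dist_triangle (u := 0) (v := x) (w := x + (γ : ZMod (n' m)))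
  omega

/-- upper bound on distance from a representation -/
lemma dist_le_rep (m : ℕ) (hm : 1 ≤ m) (N : ℕ) :
    ∀ a b c : ℤ, a.natAbs + b.natAbs + c.natAbs ≤ N →
      (X' m).dist 0 (((a + b*B m + c*C m : ℤ) : ZMod (n' m))) ≤ N := by
  induction N with
  | zero =>
    intro a b c h
    have ha : a = 0 := by omega
    have hb : b = 0 := by omega
    have hc : c = 0 := by omega
    subst ha; subst hb; subst hc
    simp
  | succ N ih =>
    intro a b c h
    rcases eq_or_ne a 0 with ha0 | ha0
    · rcases eq_or_ne b 0 with hb0 | hb0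
      · rcases eq_or_ne c 0 with hc0 | hc0
        · subst ha0; subst hb0; subst hc0
          have h0 : ((0 + 0*B m + 0*C m : ℤ) : ZMod (n' m)) = (0 : ZMod (n' m)) := by
            norm_num
          rw [h0, SimpleGraph.dist_self]
          omega
        · -- reduce c
          rcases lt_or_gt_of_ne hc0 with hc | hc
          · have key : ((a + b*B m + c*C m : ℤ) : ZMod (n' m)) =
                ((a + b*B m + (c+1)*C m : ℤ) : ZMod (n' m)) + ((-C m : ℤ) : ZMod (n' m)) := by
              push_cast; ring
            rw [key]
            have := dist_step m hm (((a + b*B m + (c+1)*C m : ℤ) : ZMod (n' m))) (-C m)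
              (by tauto)
            have h2 := ih a b (c+1) (by omega)
            omega
          · have key : ((a + b*B m + c*C m : ℤ) : ZMod (n' m)) =
                ((a + b*B m + (c-1)*C m : ℤ) : ZMod (n' m)) + ((C m : ℤ) : ZMod (n' m)) := by
              push_cast; ring
            rw [key]
            have := dist_step m hm (((a + b*B m + (c-1)*C m : ℤ) : ZMod (n' m))) (C m)
              (by tauto)
            have h2 := ih a b (c-1) (by omega)
            omega
      · rcases lt_or_gt_of_ne hb0 with hb | hb
        · have key : ((a + b*B m + c*C m : ℤ) : ZMod (n' m)) =
              ((a + (b+1)*B m + c*C m : ℤ) : ZMod (n' m)) + ((-B m : ℤ) : ZMod (n' m)) := by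
            push_cast; ring
          rw [key]
          have := dist_step m hm (((a + (b+1)*B m + c*C m : ℤ) : ZMod (n' m))) (-B m) (by tauto)
          have h2 := ih a (b+1) c (by omega)
          omega
        · have key : ((a + b*B m + c*C m : ℤ) : ZMod (n' m)) =
              ((a + (b-1)*B m + c*C m : ℤ) : ZMod (n' m)) + ((B m : ℤ) : ZMod (n' m)) := by
            push_cast; ring
          rw [key]
          have := dist_step m hm (((a + (b-1)*B m + c*C m : ℤ) : ZMod (n' m))) (B m) (by tauto)
          have h2 := ih a (b-1) c (by omega)
          omega
    · rcases lt_or_gt_of_ne ha0 with ha | ha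
      · have key : ((a + b*B m + c*C m : ℤ) : ZMod (n' m)) =
            (((a+1) + b*B m + c*C m : ℤ) : ZMod (n' m)) + ((-1 : ℤ) : ZMod (n' m)) := by
          push_cast; ring
        rw [key]
        have := dist_step m hm ((((a+1) + b*B m + c*C m : ℤ) : ZMod (n' m))) (-1) (by tauto)
        have h2 := ih (a+1) b c (by omega)
        omega
      · have key : ((a + b*B m + c*C m : ℤ) : ZMod (n' m)) =
            (((a-1) + b*B m + c*C m : ℤ) : ZMod (n' m)) + ((1 : ℤ) : ZMod (n' m)) := by
          push_cast; ring
        rw [key]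
        have := dist_step m hm ((((a-1) + b*B m + c*C m : ℤ) : ZMod (n' m))) (1) (by tauto)
        have h2 := ih (a-1) b c (by omega)
        omega

/-- every walk gives a representation -/
lemma rep_of_walk (m : ℕ) :
    ∀ {u v : ZMod (n' m)} (p : (X' m).Walk u v),
      ∃ a b c : ℤ, v = u + ((a + b*B m + c*C m : ℤ) : ZMod (n' m)) ∧
        a.natAbs + b.natAbs + c.natAbs ≤ p.length := by
  intro u v p
  induction p with
  | nil => exact ⟨0, 0, 0, by simp, by simp⟩
  | @cons u w v hadj p ih =>
    obtain ⟨a, b, c, hv, hlen⟩ := ih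
    have hadj' : u ≠ w ∧ ∃ i, w - u = ((gv m i : ℤ) : ZMod (n' m))
        ∨ u - w = ((gv m i : ℤ) : ZMod (n' m)) := hadj
    obtain ⟨hne, i, hi⟩ := hadj'
    have hgv : gv m i = 1 ∨ gv m i = B m ∨ gv m i = C m := by
      fin_cases i
      · exact Or.inl rfl
      · exact Or.inr (Or.inl rfl)
      · exact Or.inr (Or.inr rfl)
    have hL : (SimpleGraph.Walk.cons hadj p).length = p.length + 1 :=
      SimpleGraph.Walk.length_cons hadj p
    rcases hgv with hg | hg | hg <;> rw [hg] at hi <;> rcases hi with hi | hi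
    · refine ⟨a+1, b, c, ?_, by rw [hL]; omega⟩
      have hw : w = u + ((1 : ℤ) : ZMod (n' m)) := by rw [← hi]; push_cast; ring
      rw [hv, hw]; push_cast; ring
    · refine ⟨a-1, b, c, ?_, by rw [hL]; omega⟩
      have hw : w = u - ((1 : ℤ) : ZMod (n' m)) := by rw [← hi]; push_cast; ring
      rw [hv, hw]; push_cast; ring
    · refine ⟨a, b+1, c, ?_, by rw [hL]; omega⟩
      have hw : w = u + ((B m : ℤ) : ZMod (n' m)) := by rw [← hi]; push_cast; ring
      rw [hv, hw]; push_cast; ring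
    · refine ⟨a, b-1, c, ?_, by rw [hL]; omega⟩
      have hw : w = u - ((B m : ℤ) : ZMod (n' m)) := by rw [← hi]; push_cast; ring
      rw [hv, hw]; push_cast; ring
    · refine ⟨a, b, c+1, ?_, by rw [hL]; omega⟩
      have hw : w = u + ((C m : ℤ) : ZMod (n' m)) := by rw [← hi]; push_cast; ring
      rw [hv, hw]; push_cast; ring
    · refine ⟨a, b, c-1, ?_, by rw [hL]; omega⟩
      have hw : w = u - ((C m : ℤ) : ZMod (n' m)) := by rw [← hi]; push_cast; ring
      rw [hv, hw]; push_cast; ring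

/-- lower bound: distance yields a representation -/
lemma rep_of_dist (m : ℕ) (hm : 1 ≤ m) (v : ZMod (n' m)) :
    ∃ a b c : ℤ, ((a + b*B m + c*C m : ℤ) : ZMod (n' m)) = v ∧
      a.natAbs + b.natAbs + c.natAbs ≤ (X' m).dist 0 v := by
  obtain ⟨p, hp⟩ := (conn m hm).exists_walk_length_eq_dist 0 v
  obtain ⟨a, b, c, hv, hlen⟩ := rep_of_walk m p
  exact ⟨a, b, c, by rw [hv]; simp, by omega⟩

end S19

namespace S19

/-- the set of closer neighbours -/
def Sv (m : ℕ) (v : ZMod (n' m)) : Set (ZMod (n' m)) :=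
  {u | (X' m).Adj v u ∧ (X' m).dist 0 u = (X' m).dist 0 v - 1}

/-- type `T₁` -/
def T1' (m : ℕ) (v : ZMod (n' m)) : Prop := (Sv m v).ncard = 1

lemma dist_neg_le (m : ℕ) (hm : 1 ≤ m) (v : ZMod (n' m)) :
    (X' m).dist 0 (-v) ≤ (X' m).dist 0 v := by
  obtain ⟨a, b, c, hcast, hsum⟩ := rep_of_dist m hm v
  have h1 : (((-a) + (-b)*B m + (-c)*C m : ℤ) : ZMod (n' m)) = -v := by
    rw [← hcast]; push_cast; ring
  have := dist_le_rep m hm ((X' m).dist 0 v) (-a) (-b) (-c) (by simpa using hsum)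
  rwa [h1] at this

lemma dist_neg (m : ℕ) (hm : 1 ≤ m) (v : ZMod (n' m)) :
    (X' m).dist 0 (-v) = (X' m).dist 0 v := by
  refine le_antisymm (dist_neg_le m hm v) ?_
  have := dist_neg_le m hm (-v)
  rwa [neg_neg] at this

lemma adj_neg (m : ℕ) {x y : ZMod (n' m)} (h : (X' m).Adj x y) :
    (X' m).Adj (-x) (-y) := by
  obtain ⟨hne, i, hi | hi⟩ := h
  · exact ⟨fun hh => hne (by rwa [neg_inj] at hh), i, Or.inr (by rw [← hi]; ring)⟩
  · exact ⟨fun hh => hne (by rwa [neg_inj] at hh), i, Or.inl (by rw [← hi]; ring)⟩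

lemma Sv_neg (m : ℕ) (hm : 1 ≤ m) (v : ZMod (n' m)) :
    Sv m (-v) = (fun u => -u) '' Sv m v := by
  ext u
  constructor
  · rintro ⟨hadj, hd⟩
    refine ⟨-u, ⟨?_, ?_⟩, by ring⟩
    · have := adj_neg m hadj
      rwa [neg_neg] at this
    · rw [dist_neg m hm u, hd, dist_neg m hm v]
  · rintro ⟨w, ⟨hadj, hd⟩, rfl⟩
    refine ⟨adj_neg m hadj, ?_⟩
    rw [dist_neg m hm w, dist_neg m hm v]
    exact hd

lemma T1_neg (m : ℕ) (hm : 1 ≤ m) (v : ZMod (n' m)) :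
    T1' m (-v) ↔ T1' m v := by
  unfold T1'
  rw [Sv_neg m hm v, Set.ncard_image_of_injective _ neg_injective]

/-- Two distinct closer neighbours kill the `T₁` property. -/
lemma not_T1_of_pair (m : ℕ) (hm : 1 ≤ m) (v u₁ u₂ : ZMod (n' m))
    (h1 : (X' m).Adj v u₁) (h2 : (X' m).Adj v u₂) (hne : u₁ ≠ u₂)
    (hd1 : (X' m).dist 0 u₁ + 1 ≤ (X' m).dist 0 v)
    (hd2 : (X' m).dist 0 u₂ + 1 ≤ (X' m).dist 0 v) : ¬ T1' m v := by
  have key : ∀ u : ZMod (n' m), (X' m).Adj v u → (X' m).dist 0 u + 1 ≤ (X' m).dist 0 v →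
      u ∈ Sv m v := by
    intro u hadj hd
    have htri := (conn m hm).dist_triangle (u := (0 : ZMod (n' m))) (v := u) (w := v)
    have huv : (X' m).dist u v = 1 := SimpleGraph.dist_eq_one_iff_adj.mpr hadj.symm
    exact ⟨hadj, by omega⟩
  intro hT
  obtain ⟨x, hx⟩ := Set.ncard_eq_one.mp hT
  have m1 : u₁ ∈ Sv m v := key u₁ h1 hd1
  have m2 : u₂ ∈ Sv m v := key u₂ h2 hd2
  rw [hx] at m1 m2
  exact hne (m1.trans m2.symm)

/-- distance lower bound from the no-representation lemmas -/
lemma dist_ge (m : ℕ) (hm : 1 ≤ m) (v : ZMod (n' m)) (L : ℕ)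
    (h : ∀ a b c : ℤ, a.natAbs + b.natAbs + c.natAbs ≤ L - 1 →
      ((a + b*B m + c*C m : ℤ) : ZMod (n' m)) = v → False) :
    L ≤ (X' m).dist 0 v := by
  by_contra hh
  push_neg at hh
  obtain ⟨a, b, c, hcast, hsum⟩ := rep_of_dist m hm v
  exact h a b c (by omega) hcast

end S19

namespace S19

lemma bnds (m : ℕ) (hm : 1 ≤ m) :
    (2:ℤ) ≤ B m ∧ B m + 2 ≤ C m ∧ C m + C m < nI m ∧ C m + 1 < nI m := by
  obtain ⟨h1, h2, h3⟩ := mono m hm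
  refine ⟨?_, ?_, ?_, ?_⟩ <;> simp only [B, C, nI] <;> nlinarith

/-- distinctness of generator steps -/
lemma gen_cast_ne (m : ℕ) (hm : 1 ≤ m) (x y : ℤ)
    (hx : x = 1 ∨ x = -1 ∨ x = B m ∨ x = -B m ∨ x = C m ∨ x = -C m)
    (hy : y = 1 ∨ y = -1 ∨ y = B m ∨ y = -B m ∨ y = C m ∨ y = -C m)
    (hcls : ((x = 1 ∨ x = -1) ∧ (y = B m ∨ y = -B m)) ∨
            ((x = 1 ∨ x = -1) ∧ (y = C m ∨ y = -C m)) ∨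
            ((x = B m ∨ x = -B m) ∧ (y = C m ∨ y = -C m))) :
    (x : ZMod (n' m)) ≠ (y : ZMod (n' m)) := by
  obtain ⟨hB2, hBC, hCn, hC1⟩ := bnds m hm
  apply cast_ne m x y
  · rcases hcls with ⟨hx', hy'⟩ | ⟨hx', hy'⟩ | ⟨hx', hy'⟩ <;>
      rcases hx' with rfl | rfl <;> rcases hy' with rfl | rfl <;> intro hh <;> linarith
  · have : |x| + |y| < nI m := by
      have hxa : |x| ≤ C m := by
        rcases hx with rfl | rfl | rfl | rfl | rfl | rfl
        · rw [abs_one]; linarith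
        · rw [abs_neg, abs_one]; linarith
        · rw [abs_of_nonneg (by linarith : (0:ℤ) ≤ B m)]; linarith
        · rw [abs_neg, abs_of_nonneg (by linarith : (0:ℤ) ≤ B m)]; linarith
        · rw [abs_of_nonneg (by linarith : (0:ℤ) ≤ C m)]
        · rw [abs_neg, abs_of_nonneg (by linarith : (0:ℤ) ≤ C m)]
      have hya : |y| ≤ C m := by
        rcases hy with rfl | rfl | rfl | rfl | rfl | rfl
        · rw [abs_one]; linarith
        · rw [abs_neg, abs_one]; linarith
        · rw [abs_of_nonneg (by linarith : (0:ℤ) ≤ B m)]; linarith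
        · rw [abs_neg, abs_of_nonneg (by linarith : (0:ℤ) ≤ B m)]; linarith
        · rw [abs_of_nonneg (by linarith : (0:ℤ) ≤ C m)]
        · rw [abs_neg, abs_of_nonneg (by linarith : (0:ℤ) ≤ C m)]
      linarith
    calc |x - y| ≤ |x| + |y| := abs_sub x y
      _ < nI m := this

/-- a nonzero first coordinate yields a closer neighbour (step ±1) -/
lemma closerA (m : ℕ) (hm : 1 ≤ m) (v : ZMod (n' m)) (l : ℕ) (a b c : ℤ)
    (hd : (X' m).dist 0 v = l)
    (hcast : ((a + b*B m + c*C m : ℤ) : ZMod (n' m)) = v)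
    (hsum : a.natAbs + b.natAbs + c.natAbs = l) (ha : a ≠ 0) :
    ∃ δ : ℤ, (δ = 1 ∨ δ = -1) ∧ (X' m).Adj v (v + (δ : ZMod (n' m))) ∧
      (X' m).dist 0 (v + (δ : ZMod (n' m))) + 1 ≤ l := by
  rcases lt_or_gt_of_ne ha with h | h
  · refine ⟨1, Or.inl rfl, adj_int m hm v 1 (by tauto), ?_⟩
    have key : v + ((1:ℤ) : ZMod (n' m)) = (((a+1) + b*B m + c*C m : ℤ) : ZMod (n' m)) := by
      rw [← hcast]; push_cast; ring
    rw [key]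
    have := dist_le_rep m hm (l-1) (a+1) b c (by omega)
    omega
  · refine ⟨-1, Or.inr rfl, adj_int m hm v (-1) (by tauto), ?_⟩
    have key : v + ((-1:ℤ) : ZMod (n' m)) = (((a-1) + b*B m + c*C m : ℤ) : ZMod (n' m)) := by
      rw [← hcast]; push_cast; ring
    rw [key]
    have := dist_le_rep m hm (l-1) (a-1) b c (by omega)
    omega

lemma closerB (m : ℕ) (hm : 1 ≤ m) (v : ZMod (n' m)) (l : ℕ) (a b c : ℤ)
    (hd : (X' m).dist 0 v = l)
    (hcast : ((a + b*B m + c*C m : ℤ) : ZMod (n' m)) = v)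
    (hsum : a.natAbs + b.natAbs + c.natAbs = l) (hb : b ≠ 0) :
    ∃ δ : ℤ, (δ = B m ∨ δ = -B m) ∧ (X' m).Adj v (v + (δ : ZMod (n' m))) ∧
      (X' m).dist 0 (v + (δ : ZMod (n' m))) + 1 ≤ l := by
  rcases lt_or_gt_of_ne hb with h | h
  · refine ⟨B m, Or.inl rfl, adj_int m hm v (B m) (by tauto), ?_⟩
    have key : v + ((B m : ℤ) : ZMod (n' m)) = ((a + (b+1)*B m + c*C m : ℤ) : ZMod (n' m)) := by
      rw [← hcast]; push_cast; ring
    rw [key]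
    have := dist_le_rep m hm (l-1) a (b+1) c (by omega)
    omega
  · refine ⟨-B m, Or.inr rfl, adj_int m hm v (-B m) (by tauto), ?_⟩
    have key : v + ((-B m : ℤ) : ZMod (n' m)) = ((a + (b-1)*B m + c*C m : ℤ) : ZMod (n' m)) := by
      rw [← hcast]; push_cast; ring
    rw [key]
    have := dist_le_rep m hm (l-1) a (b-1) c (by omega)
    omega

lemma closerC (m : ℕ) (hm : 1 ≤ m) (v : ZMod (n' m)) (l : ℕ) (a b c : ℤ)
    (hd : (X' m).dist 0 v = l)
    (hcast : ((a + b*B m + c*C m : ℤ) : ZMod (n' m)) = v)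
    (hsum : a.natAbs + b.natAbs + c.natAbs = l) (hc : c ≠ 0) :
    ∃ δ : ℤ, (δ = C m ∨ δ = -C m) ∧ (X' m).Adj v (v + (δ : ZMod (n' m))) ∧
      (X' m).dist 0 (v + (δ : ZMod (n' m))) + 1 ≤ l := by
  rcases lt_or_gt_of_ne hc with h | h
  · refine ⟨C m, Or.inl rfl, adj_int m hm v (C m) (by tauto), ?_⟩
    have key : v + ((C m : ℤ) : ZMod (n' m)) = ((a + b*B m + (c+1)*C m : ℤ) : ZMod (n' m)) := by
      rw [← hcast]; push_cast; ring
    rw [key]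
    have := dist_le_rep m hm (l-1) a b (c+1) (by omega)
    omega
  · refine ⟨-C m, Or.inr rfl, adj_int m hm v (-C m) (by tauto), ?_⟩
    have key : v + ((-C m : ℤ) : ZMod (n' m)) = ((a + b*B m + (c-1)*C m : ℤ) : ZMod (n' m)) := by
      rw [← hcast]; push_cast; ring
    rw [key]
    have := dist_le_rep m hm (l-1) a b (c-1) (by omega)
    omega

/-- two nonzero coordinates exclude `T₁` -/
lemma notT1_two (m : ℕ) (hm : 1 ≤ m) (v : ZMod (n' m)) (l : ℕ) (a b c : ℤ)
    (hd : (X' m).dist 0 v = l)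
    (hcast : ((a + b*B m + c*C m : ℤ) : ZMod (n' m)) = v)
    (hsum : a.natAbs + b.natAbs + c.natAbs = l)
    (h2 : (a ≠ 0 ∧ b ≠ 0) ∨ (a ≠ 0 ∧ c ≠ 0) ∨ (b ≠ 0 ∧ c ≠ 0)) :
    ¬ T1' m v := by
  rcases h2 with ⟨h1, h2⟩ | ⟨h1, h2⟩ | ⟨h1, h2⟩
  · obtain ⟨δ₁, hδ₁, hadj₁, hd₁⟩ := closerA m hm v l a b c hd hcast hsum h1
    obtain ⟨δ₂, hδ₂, hadj₂, hd₂⟩ := closerB m hm v l a b c hd hcast hsum h2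
    refine not_T1_of_pair m hm v _ _ hadj₁ hadj₂ ?_ (by omega) (by omega)
    intro hh
    exact gen_cast_ne m hm δ₁ δ₂ (by tauto) (by tauto) (Or.inl ⟨hδ₁, hδ₂⟩)
      (add_left_cancel hh)
  · obtain ⟨δ₁, hδ₁, hadj₁, hd₁⟩ := closerA m hm v l a b c hd hcast hsum h1
    obtain ⟨δ₂, hδ₂, hadj₂, hd₂⟩ := closerC m hm v l a b c hd hcast hsum h2
    refine not_T1_of_pair m hm v _ _ hadj₁ hadj₂ ?_ (by omega) (by omega)
    intro hh
    exact gen_cast_ne m hm δ₁ δ₂ (by tauto) (by tauto) (Or.inr (Or.inl ⟨hδ₁, hδ₂⟩))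
      (add_left_cancel hh)
  · obtain ⟨δ₁, hδ₁, hadj₁, hd₁⟩ := closerB m hm v l a b c hd hcast hsum h1
    obtain ⟨δ₂, hδ₂, hadj₂, hd₂⟩ := closerC m hm v l a b c hd hcast hsum h2
    refine not_T1_of_pair m hm v _ _ hadj₁ hadj₂ ?_ (by omega) (by omega)
    intro hh
    exact gen_cast_ne m hm δ₁ δ₂ (by tauto) (by tauto) (Or.inr (Or.inr ⟨hδ₁, hδ₂⟩))
      (add_left_cancel hh)

end S19

namespace S19

lemma notT1_axis1 (m : ℕ) (hm : 1 ≤ m) (l : ℕ) (hl : 2*m+2 ≤ l)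
    (hd : (X' m).dist 0 (((l:ℤ)) : ZMod (n' m)) = l) :
    ¬ T1' m (((l:ℤ)) : ZMod (n' m)) := by
  set v : ZMod (n' m) := (((l:ℤ)) : ZMod (n' m)) with hv
  have hadj₁ : (X' m).Adj v (v + ((-1 : ℤ) : ZMod (n' m))) := adj_int m hm v (-1) (by tauto)
  have hadj₂ : (X' m).Adj v (v + ((B m : ℤ) : ZMod (n' m))) := adj_int m hm v (B m) (by tauto)
  have hd₁ : (X' m).dist 0 (v + ((-1 : ℤ) : ZMod (n' m))) + 1 ≤ l := by
    have key : v + ((-1 : ℤ) : ZMod (n' m)) =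
        ((((l:ℤ)-1) + 0*B m + 0*C m : ℤ) : ZMod (n' m)) := by
      rw [hv]; push_cast; ring
    rw [key]
    have := dist_le_rep m hm (l-1) ((l:ℤ)-1) 0 0 (by omega)
    omega
  have hd₂ : (X' m).dist 0 (v + ((B m : ℤ) : ZMod (n' m))) + 1 ≤ l := by
    have key : v + ((B m : ℤ) : ZMod (n' m)) =
        ((((l:ℤ)-(4*(m:ℤ)+2)) + 0*B m + 1*C m : ℤ) : ZMod (n' m)) := by
      rw [hv]
      have : ((((l:ℤ)-(4*(m:ℤ)+2)) + 0*B m + 1*C m : ℤ)) = (l:ℤ) + B m := by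
        simp only [B, C]; ring
      rw [this]; push_cast; ring
    rw [key]
    have := dist_le_rep m hm (l-1) ((l:ℤ)-(4*(m:ℤ)+2)) 0 1 (by omega)
    omega
  refine not_T1_of_pair m hm v _ _ hadj₁ hadj₂ ?_ (by omega) (by omega)
  intro hh
  exact gen_cast_ne m hm (-1) (B m) (by tauto) (by tauto) (Or.inl (by tauto))
    (add_left_cancel hh)

lemma notT1_axisB (m : ℕ) (hm : 1 ≤ m) (l : ℕ) (hl : 2*m+1 ≤ l)
    (hd : (X' m).dist 0 (((l:ℤ) * B m : ℤ) : ZMod (n' m)) = l) :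
    ¬ T1' m (((l:ℤ) * B m : ℤ) : ZMod (n' m)) := by
  set v : ZMod (n' m) := (((l:ℤ) * B m : ℤ) : ZMod (n' m)) with hv
  have hadj₁ : (X' m).Adj v (v + ((-B m : ℤ) : ZMod (n' m))) := adj_int m hm v (-B m) (by tauto)
  have hadj₂ : (X' m).Adj v (v + ((-1 : ℤ) : ZMod (n' m))) := adj_int m hm v (-1) (by tauto)
  have hd₁ : (X' m).dist 0 (v + ((-B m : ℤ) : ZMod (n' m))) + 1 ≤ l := by
    have key : v + ((-B m : ℤ) : ZMod (n' m)) =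
        ((0 + ((l:ℤ)-1)*B m + 0*C m : ℤ) : ZMod (n' m)) := by
      rw [hv]; push_cast; ring
    rw [key]
    have := dist_le_rep m hm (l-1) 0 ((l:ℤ)-1) 0 (by omega)
    omega
  have hd₂ : (X' m).dist 0 (v + ((-1 : ℤ) : ZMod (n' m))) + 1 ≤ l := by
    have key : v + ((-1 : ℤ) : ZMod (n' m)) =
        ((0 + ((l:ℤ)-4*(m:ℤ))*B m + (-1)*C m : ℤ) : ZMod (n' m)) := by
      have e1 : ((0 + ((l:ℤ)-4*(m:ℤ))*B m + (-1)*C m : ℤ) : ZMod (n' m)) =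
          (((l:ℤ)*B m - 1 : ℤ) : ZMod (n' m)) := by
        apply cast_eq_of m _ _ (-1)
        simp only [B, C, nI]; ring
      rw [e1, hv]; push_cast; ring
    rw [key]
    have := dist_le_rep m hm (l-1) 0 ((l:ℤ)-4*(m:ℤ)) (-1) (by omega)
    omega
  refine not_T1_of_pair m hm v _ _ hadj₁ hadj₂ ?_ (by omega) (by omega)
  intro hh
  have := add_left_cancel hh
  exact gen_cast_ne m hm (-1) (-B m) (by tauto) (by tauto) (Or.inl (by tauto)) this.symm

lemma notT1_axisC (m : ℕ) (hm : 1 ≤ m) (l : ℕ) (hl : 2*m+1 ≤ l)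
    (hd : (X' m).dist 0 (((l:ℤ) * C m : ℤ) : ZMod (n' m)) = l) :
    ¬ T1' m (((l:ℤ) * C m : ℤ) : ZMod (n' m)) := by
  set v : ZMod (n' m) := (((l:ℤ) * C m : ℤ) : ZMod (n' m)) with hv
  have hadj₁ : (X' m).Adj v (v + ((-C m : ℤ) : ZMod (n' m))) := adj_int m hm v (-C m) (by tauto)
  have hadj₂ : (X' m).Adj v (v + ((1 : ℤ) : ZMod (n' m))) := adj_int m hm v 1 (by tauto)
  have hd₁ : (X' m).dist 0 (v + ((-C m : ℤ) : ZMod (n' m))) + 1 ≤ l := by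
    have key : v + ((-C m : ℤ) : ZMod (n' m)) =
        ((0 + 0*B m + ((l:ℤ)-1)*C m : ℤ) : ZMod (n' m)) := by
      rw [hv]; push_cast; ring
    rw [key]
    have := dist_le_rep m hm (l-1) 0 0 ((l:ℤ)-1) (by omega)
    omega
  have hd₂ : (X' m).dist 0 (v + ((1 : ℤ) : ZMod (n' m))) + 1 ≤ l := by
    have key : v + ((1 : ℤ) : ZMod (n' m)) =
        ((0 + 1*B m + ((l:ℤ)-4*(m:ℤ))*C m : ℤ) : ZMod (n' m)) := by
      have e1 : ((0 + 1*B m + ((l:ℤ)-4*(m:ℤ))*C m : ℤ) : ZMod (n' m)) =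
          (((l:ℤ)*C m + 1 : ℤ) : ZMod (n' m)) := by
        apply cast_eq_of m _ _ (-1)
        simp only [B, C, nI]; ring
      rw [e1, hv]; push_cast; ring
    rw [key]
    have := dist_le_rep m hm (l-1) 0 1 ((l:ℤ)-4*(m:ℤ)) (by omega)
    omega
  refine not_T1_of_pair m hm v _ _ hadj₁ hadj₂ ?_ (by omega) (by omega)
  intro hh
  have := add_left_cancel hh
  exact gen_cast_ne m hm (1) (-C m) (by tauto) (by tauto) (Or.inr (Or.inl (by tauto))) this.symm

end S19

namespace S19

/-- no vertex of distance `≥ 2m+1` other than `±(2m+1)` is of type `T₁` -/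
lemma main_notT1 (m : ℕ) (hm : 1 ≤ m) (l : ℕ) (v : ZMod (n' m))
    (hd : (X' m).dist 0 v = l) (hl : 2*m+1 ≤ l)
    (hcase : 2*m+2 ≤ l ∨ (v ≠ ((2*(m:ℤ)+1 : ℤ) : ZMod (n' m)) ∧
      v ≠ ((-(2*(m:ℤ)+1) : ℤ) : ZMod (n' m)))) :
    ¬ T1' m v := by
  obtain ⟨a, b, c, hcast, hsum⟩ := rep_of_dist m hm v
  rw [hd] at hsum
  have hge : l ≤ a.natAbs + b.natAbs + c.natAbs := by
    have := dist_le_rep m hm (a.natAbs + b.natAbs + c.natAbs) a b c le_rfl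
    rw [hcast, hd] at this
    exact this
  have hsum' : a.natAbs + b.natAbs + c.natAbs = l := le_antisymm hsum hge
  by_cases hA : a = 0
  · by_cases hB0 : b = 0
    · -- a = b = 0, c = ±l
      subst hA; subst hB0
      have hC0 : c ≠ 0 := by intro hh; subst hh; simp at hsum'; omega
      have hcl : c = (l:ℤ) ∨ c = -(l:ℤ) := by omega
      rcases hcl with rfl | hcl
      · have hveq : (((l:ℤ) * C m : ℤ) : ZMod (n' m)) = v := by
          rw [← hcast]; push_cast; ring
        rw [← hveq] at hd ⊢
        exact notT1_axisC m hm l (by omega) hd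
      · have hveq : v = -((((l:ℤ) * C m : ℤ)) : ZMod (n' m)) := by
          rw [← hcast, hcl]; push_cast; ring
        have hdist : (X' m).dist 0 (((l:ℤ) * C m : ℤ) : ZMod (n' m)) = l := by
          rw [← dist_neg m hm, ← hveq]; exact hd
        rw [hveq, T1_neg m hm]
        exact notT1_axisC m hm l (by omega) hdist
    · by_cases hC0 : c = 0
      · -- a = c = 0, b = ±l
        subst hA; subst hC0
        have hbl : b = (l:ℤ) ∨ b = -(l:ℤ) := by omega
        rcases hbl with rfl | hbl
        · have hveq : (((l:ℤ) * B m : ℤ) : ZMod (n' m)) = v := by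
            rw [← hcast]; push_cast; ring
          rw [← hveq] at hd ⊢
          exact notT1_axisB m hm l (by omega) hd
        · have hveq : v = -((((l:ℤ) * B m : ℤ)) : ZMod (n' m)) := by
            rw [← hcast, hbl]; push_cast; ring
          have hdist : (X' m).dist 0 (((l:ℤ) * B m : ℤ) : ZMod (n' m)) = l := by
            rw [← dist_neg m hm, ← hveq]; exact hd
          rw [hveq, T1_neg m hm]
          exact notT1_axisB m hm l (by omega) hdist
      · exact notT1_two m hm v l a b c hd hcast hsum' (Or.inr (Or.inr ⟨hB0, hC0⟩))
  · by_cases hB0 : b = 0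
    · by_cases hC0 : c = 0
      · -- b = c = 0, a = ±l
        subst hB0; subst hC0
        have hal : a = (l:ℤ) ∨ a = -(l:ℤ) := by omega
        by_cases hll : 2*m+2 ≤ l
        · rcases hal with rfl | hal
          · have hveq : ((((l:ℤ)) : ℤ) : ZMod (n' m)) = v := by
              rw [← hcast]; push_cast; ring
            rw [← hveq] at hd ⊢
            exact notT1_axis1 m hm l hll hd
          · have hveq : v = -((((l:ℤ)) : ℤ) : ZMod (n' m)) := by
              rw [← hcast, hal]; push_cast; ring
            have hdist : (X' m).dist 0 ((((l:ℤ)) : ℤ) : ZMod (n' m)) = l := by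
              rw [← dist_neg m hm, ← hveq]; exact hd
            rw [hveq, T1_neg m hm]
            exact notT1_axis1 m hm l hll hdist
        · exfalso
          have hl1 : l = 2*m+1 := by omega
          rcases hcase with hc2 | ⟨hne1, hne2⟩
          · omega
          · rcases hal with rfl | hal
            · apply hne1
              rw [← hcast]
              subst hl1; push_cast; ring
            · apply hne2
              rw [← hcast, hal]
              subst hl1; push_cast; ring
      · exact notT1_two m hm v l a b c hd hcast hsum' (Or.inr (Or.inl ⟨hA, hC0⟩))
    · exact notT1_two m hm v l a b c hd hcast hsum' (Or.inl ⟨hA, hB0⟩)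

lemma dist_v0 (m : ℕ) (hm : 1 ≤ m) :
    (X' m).dist 0 ((2*(m:ℤ)+1 : ℤ) : ZMod (n' m)) = 2*m+1 := by
  have hle : (X' m).dist 0 ((2*(m:ℤ)+1 : ℤ) : ZMod (n' m)) ≤ 2*m+1 := by
    have key : ((2*(m:ℤ)+1 : ℤ) : ZMod (n' m)) =
        (((2*(m:ℤ)+1) + 0*B m + 0*C m : ℤ) : ZMod (n' m)) := by push_cast; ring
    rw [key]
    exact dist_le_rep m hm (2*m+1) (2*(m:ℤ)+1) 0 0 (by omega)
  have hge : 2*m+1 ≤ (X' m).dist 0 ((2*(m:ℤ)+1 : ℤ) : ZMod (n' m)) := by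
    apply dist_ge m hm _ (2*m+1)
    intro a b c hs hcast
    have hV : |(2*(m:ℤ)+1)| ≤ 8*(m:ℤ)^2+8*(m:ℤ)+3 := by
      obtain ⟨h1, h2, h3⟩ := mono m hm
      rw [abs_of_nonneg (by linarith)]; nlinarith
    have := exact_eq m hm a b c (2*(m:ℤ)+1) (by omega) hV hcast
    exact noC1 m hm a b c (by omega) this
  omega

lemma dist_2m (m : ℕ) (hm : 1 ≤ m) :
    (X' m).dist 0 ((2*(m:ℤ) : ℤ) : ZMod (n' m)) = 2*m := by
  have hle : (X' m).dist 0 ((2*(m:ℤ) : ℤ) : ZMod (n' m)) ≤ 2*m := by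
    have key : ((2*(m:ℤ) : ℤ) : ZMod (n' m)) =
        (((2*(m:ℤ)) + 0*B m + 0*C m : ℤ) : ZMod (n' m)) := by push_cast; ring
    rw [key]
    exact dist_le_rep m hm (2*m) (2*(m:ℤ)) 0 0 (by omega)
  have hge : 2*m ≤ (X' m).dist 0 ((2*(m:ℤ) : ℤ) : ZMod (n' m)) := by
    apply dist_ge m hm _ (2*m)
    intro a b c hs hcast
    have hV : |(2*(m:ℤ))| ≤ 8*(m:ℤ)^2+8*(m:ℤ)+3 := by
      obtain ⟨h1, h2, h3⟩ := mono m hm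
      rw [abs_of_nonneg (by linarith)]; nlinarith
    have := exact_eq m hm a b c (2*(m:ℤ)) (by omega) hV hcast
    exact noC2 m hm a b c (by omega) this
  omega

end S19

namespace S19

lemma Sv_v0 (m : ℕ) (hm : 1 ≤ m) :
    Sv m ((2*(m:ℤ)+1 : ℤ) : ZMod (n' m)) = {((2*(m:ℤ) : ℤ) : ZMod (n' m))} := by
  obtain ⟨hmo1, hmo2, hmo3⟩ := mono m hm
  set v₀ : ZMod (n' m) := ((2*(m:ℤ)+1 : ℤ) : ZMod (n' m)) with hv₀
  ext u
  simp only [Set.mem_singleton_iff]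
  constructor
  · rintro ⟨hadj, hd⟩
    rw [dist_v0 m hm] at hd
    have hdu : (X' m).dist 0 u = 2*m := by omega
    have kill : ∀ (V : ℤ), |V| ≤ 8*(m:ℤ)^2+8*(m:ℤ)+3 → u = ((V : ℤ) : ZMod (n' m)) →
        (∀ a b c : ℤ, a.natAbs + b.natAbs + c.natAbs ≤ 2*m →
          a + b*B m + c*C m = V → False) → u = ((2*(m:ℤ) : ℤ) : ZMod (n' m)) := by
      intro V hV hu hno
      exfalso
      obtain ⟨a, b, c, hc, hs⟩ := rep_of_dist m hm u
      rw [hdu] at hs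
      exact hno a b c hs (exact_eq m hm a b c V hs hV (by rw [hc, hu]))
    have hadj' : v₀ ≠ u ∧ ∃ i, u - v₀ = ((gv m i : ℤ) : ZMod (n' m))
        ∨ v₀ - u = ((gv m i : ℤ) : ZMod (n' m)) := hadj
    obtain ⟨hne, i, hi⟩ := hadj'
    have hgv : gv m i = 1 ∨ gv m i = B m ∨ gv m i = C m := by
      fin_cases i
      · exact Or.inl rfl
      · exact Or.inr (Or.inl rfl)
      · exact Or.inr (Or.inr rfl)
    rcases hgv with hg | hg | hg <;> rw [hg] at hi <;> rcases hi with hi | hi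
    · -- u = v₀ + 1 = 2m+2
      refine kill (2*(m:ℤ)+2) ?_ ?_ (fun a b c hs he => noC3 m hm a b c hs he)
      · rw [abs_of_nonneg (by linarith)]; nlinarith
      · have h' : u = v₀ + ((1:ℤ) : ZMod (n' m)) := by rw [← hi]; ring
        rw [h', hv₀]; push_cast; ring
    · -- u = v₀ - 1 = 2m : the good case
      have h' : u = v₀ - ((1:ℤ) : ZMod (n' m)) := by rw [← hi]; ring
      rw [h', hv₀]; push_cast; ring
    · refine kill (2*(m:ℤ)+1 + B m) ?_ ?_ (fun a b c hs he => noC4 m hm a b c hs he)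
      · rw [abs_of_nonneg (by simp only [B]; nlinarith)]; simp only [B]; nlinarith
      · have h' : u = v₀ + ((B m : ℤ) : ZMod (n' m)) := by rw [← hi]; ring
        rw [h', hv₀]; push_cast; ring
    · refine kill (2*(m:ℤ)+1 - B m) ?_ ?_ (fun a b c hs he => noC5 m hm a b c hs he)
      · rw [abs_of_nonpos (by simp only [B]; nlinarith)]; simp only [B]; nlinarith
      · have h' : u = v₀ - ((B m : ℤ) : ZMod (n' m)) := by rw [← hi]; ring
        rw [h', hv₀]; push_cast; ring
    · refine kill (2*(m:ℤ)+1 + C m) ?_ ?_ (fun a b c hs he => noC6 m hm a b c hs he)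
      · rw [abs_of_nonneg (by simp only [C]; nlinarith)]; simp only [C]; nlinarith
      · have h' : u = v₀ + ((C m : ℤ) : ZMod (n' m)) := by rw [← hi]; ring
        rw [h', hv₀]; push_cast; ring
    · refine kill (2*(m:ℤ)+1 - C m) ?_ ?_ (fun a b c hs he => noC7 m hm a b c hs he)
      · rw [abs_of_nonpos (by simp only [C]; nlinarith)]; simp only [C]; nlinarith
      · have h' : u = v₀ - ((C m : ℤ) : ZMod (n' m)) := by rw [← hi]; ring
        rw [h', hv₀]; push_cast; ring
  · intro hu
    have h' : u = v₀ + ((-1 : ℤ) : ZMod (n' m)) := by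
      rw [hu, hv₀]; push_cast; ring
    constructor
    · rw [h']
      exact adj_int m hm v₀ (-1) (by tauto)
    · rw [hu, dist_2m m hm, dist_v0 m hm]; omega

lemma T1_v0 (m : ℕ) (hm : 1 ≤ m) : T1' m ((2*(m:ℤ)+1 : ℤ) : ZMod (n' m)) := by
  unfold T1'
  rw [Sv_v0 m hm]
  exact Set.ncard_singleton _

lemma v0_neg_eq (m : ℕ) :
    ((-(2*(m:ℤ)+1) : ℤ) : ZMod (n' m)) = -((2*(m:ℤ)+1 : ℤ) : ZMod (n' m)) := by
  push_cast; ring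

lemma dist_v0' (m : ℕ) (hm : 1 ≤ m) :
    (X' m).dist 0 ((-(2*(m:ℤ)+1) : ℤ) : ZMod (n' m)) = 2*m+1 := by
  rw [v0_neg_eq, dist_neg m hm, dist_v0 m hm]

lemma T1_v0' (m : ℕ) (hm : 1 ≤ m) : T1' m ((-(2*(m:ℤ)+1) : ℤ) : ZMod (n' m)) := by
  rw [v0_neg_eq, T1_neg m hm]
  exact T1_v0 m hm

lemma v0_ne (m : ℕ) (hm : 1 ≤ m) :
    ((2*(m:ℤ)+1 : ℤ) : ZMod (n' m)) ≠ ((-(2*(m:ℤ)+1) : ℤ) : ZMod (n' m)) := by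
  obtain ⟨h1, h2, h3⟩ := mono m hm
  apply cast_ne m _ _ (by linarith)
  rw [abs_of_nonneg (by linarith : (0:ℤ) ≤ (2*(m:ℤ)+1) - (-(2*(m:ℤ)+1)))]
  simp only [nI]; nlinarith

end S19


/-- In the largest known circulant graph of degree 6 and diameter `k = 3m` (isomorphism
class 2; order `n = 32m³+16m²+6m+1`, generators `1`, `8m²+2m`, `8m²+6m+2`), the type
`T₁` vertices at distance exactly `2m+1` from `0` are precisely the two distinct
vertices `±(2m+1)`, and there are no type `T₁` vertices at any distance `l ≥ 2m+2`. -/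
theorem stmt19 (m : ℕ) (hm : 1 ≤ m) :
    let n : ℕ := 32*m^3+16*m^2+6*m+1
    let X := circulant n ![(1 : ℤ), 8*(m : ℤ)^2+2*m, 8*(m : ℤ)^2+6*m+2]
    let T1 : ZMod n → Prop := fun v =>
      {u : ZMod n | X.Adj v u ∧ X.dist 0 u = X.dist 0 v - 1}.ncard = 1
    ({v : ZMod n | X.dist 0 v = 2*m+1 ∧ T1 v} =
      {((2*(m : ℤ)+1 : ℤ) : ZMod n), ((-(2*(m : ℤ)+1) : ℤ) : ZMod n)}) ∧
    ({((2*(m : ℤ)+1 : ℤ) : ZMod n), ((-(2*(m : ℤ)+1) : ℤ) : ZMod n)} : Set (ZMod n)).ncard = 2 ∧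
    (∀ l, 2*m+2 ≤ l → ∀ v : ZMod n, X.dist 0 v = l → ¬ T1 v) := by
  intro n X T1
  refine ⟨?_, ?_, ?_⟩
  · apply Set.eq_of_subset_of_subset
    · intro v hv
      obtain ⟨hd, hT⟩ := hv
      have hT' : S19.T1' m v := hT
      have hd' : (S19.X' m).dist 0 v = 2*m+1 := hd
      by_contra hmem
      simp only [Set.mem_insert_iff, Set.mem_singleton_iff] at hmem
      push_neg at hmem
      exact S19.main_notT1 m hm (2*m+1) v hd' (le_refl _) (Or.inr ⟨hmem.1, hmem.2⟩) hT'
    · intro v hv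
      simp only [Set.mem_insert_iff, Set.mem_singleton_iff] at hv
      rcases hv with rfl | rfl
      · exact ⟨S19.dist_v0 m hm, S19.T1_v0 m hm⟩
      · exact ⟨S19.dist_v0' m hm, S19.T1_v0' m hm⟩
  · exact Set.ncard_pair (S19.v0_ne m hm)
  · intro l hl v hd hT
    exact S19.main_notT1 m hm l v hd (by omega) (Or.inl hl) hT
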